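/- If C is not D-pointed — i.e., there exist acyclic homomorphisms f', f'' : D → C agreeing everywhere except at one vertex x₀, with f'(x₀)f''(x₀) an arc of C — and ψ : D* → D is a surjective acyclic homomorphism with |ψ⁻¹(x₀)| ≥ 2, with ψ⁻¹(x₀) partitioned into nonempty sets A and B such that no arc of D* joins A and B, then the map φ defined by φ(y) = f'(ψ(y)) for y ∉ B and φ(y) = f''(ψ(y)) for y ∈ B is an acyclic homomorphism D* → C that cannot be written as f ∘ ψ for any map f : D → C. -/
import Mathlib


/-- An acyclic homomorphism from the digraph `(α, rD)` to the digraph `(β, rC)`. -/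
def AcyHom {α β : Type*} (rD : α → α → Prop) (rC : β → β → Prop) (ρ : α → β) : Prop :=
  (∀ u v, rD u v → ρ u = ρ v ∨ rC (ρ u) (ρ v)) ∧
  ∀ x : β, ¬ ∃ y, Relation.TransGen (fun u v => ρ u = x ∧ ρ v = x ∧ rD u v) y y

/-- Lifting a cycle: if every `S`-step projects, via `ψ`, to either a stationary
step or a `Q`-step, then a `TransGen S` chain yields either a `Q`-chain downstairs
or a chain inside a single `ψ`-fiber. -/
lemma cycle_lift {VS VD : Type*} (rS : VS → VS → Prop) (Q : VD → VD → Prop)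
    (ψ : VS → VD) (S : VS → VS → Prop)
    (hstep : ∀ u v, S u v → rS u v ∧ (ψ u = ψ v ∨ Q (ψ u) (ψ v)))
    {u v : VS} (h : Relation.TransGen S u v) :
    Relation.TransGen Q (ψ u) (ψ v) ∨
      (ψ v = ψ u ∧
        Relation.TransGen (fun a b => ψ a = ψ u ∧ ψ b = ψ u ∧ rS a b) u v) := by
  induction h with
  | single hs =>
    obtain ⟨hr, heq | hQ⟩ := hstep _ _ hs
    · exact Or.inr ⟨heq.symm, Relation.TransGen.single ⟨rfl, heq.symm, hr⟩⟩
    · exact Or.inl (Relation.TransGen.single hQ)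
  | tail hab hbv ih =>
    obtain ⟨hr, heq | hQ⟩ := hstep _ _ hbv
    · rcases ih with hQ' | ⟨hb, hch⟩
      · exact Or.inl (heq ▸ hQ')
      · exact Or.inr ⟨heq ▸ hb, hch.tail ⟨hb, heq ▸ hb, hr⟩⟩
    · rcases ih with hQ' | ⟨hb, hch⟩
      · exact Or.inl (hQ'.tail hQ)
      · exact Or.inl (Relation.TransGen.single (hb ▸ hQ))

theorem not_pointed_gives_nonfactoring {VD VC VS : Type*}
    [Fintype VD] [Fintype VC] [Fintype VS]
    (rD : VD → VD → Prop) (rC : VC → VC → Prop) (rS : VS → VS → Prop)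
    (f' f'' : VD → VC) (hf' : AcyHom rD rC f') (hf'' : AcyHom rD rC f'')
    (x₀ : VD) (hne : f' x₀ ≠ f'' x₀) (hagree : ∀ w, w ≠ x₀ → f' w = f'' w)
    (harc : rC (f' x₀) (f'' x₀))
    (ψ : VS → VD) (hψ : AcyHom rS rD ψ) (hψsurj : Function.Surjective ψ)
    (A B : Set VS) (hA : A.Nonempty) (hB : B.Nonempty)
    (hAB : A ∪ B = ψ ⁻¹' {x₀}) (hdisj : Disjoint A B)
    (hnoarc : ∀ u ∈ A, ∀ v ∈ B, ¬ rS u v ∧ ¬ rS v u)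
    (φ : VS → VC)
    (hφB : ∀ y ∈ B, φ y = f'' (ψ y)) (hφnB : ∀ y ∉ B, φ y = f' (ψ y)) :
    AcyHom rS rC φ ∧ ¬ ∃ f : VD → VC, φ = f ∘ ψ := by
  -- a vertex of `B` has `ψ`-image `x₀`
  have hBx : ∀ y ∈ B, ψ y = x₀ := fun y hy => by
    have : y ∈ ψ ⁻¹' {x₀} := hAB ▸ Or.inr hy
    simpa using this
  have hAx : ∀ y ∈ A, ψ y = x₀ := fun y hy => by
    have : y ∈ ψ ⁻¹' {x₀} := hAB ▸ Or.inl hy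
    simpa using this
  refine ⟨⟨?_, ?_⟩, ?_⟩
  · -- arc condition
    intro u v huv
    by_cases hu : u ∈ B <;> by_cases hv : v ∈ B
    · rw [hφB u hu, hφB v hv, hBx u hu, hBx v hv]; exact Or.inl rfl
    · -- u ∈ B, v ∉ B
      have hψu : ψ u = x₀ := hBx u hu
      have hψv : ψ v ≠ x₀ := by
        intro h
        have : v ∈ A ∪ B := hAB ▸ (by simpa using h)
        rcases this with hvA | hvB
        · exact (hnoarc v hvA u hu).2 huv
        · exact hv hvB
      have hrd : rD (ψ u) (ψ v) := by
        rcases hψ.1 u v huv with h | h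
        · exact absurd (h ▸ hψu) hψv
        · exact h
      rw [hφB u hu, hφnB v hv, hagree (ψ v) hψv]
      rcases hf''.1 _ _ hrd with h | h
      · exact Or.inl h
      · exact Or.inr h
    · -- u ∉ B, v ∈ B
      have hψv : ψ v = x₀ := hBx v hv
      have hψu : ψ u ≠ x₀ := by
        intro h
        have : u ∈ A ∪ B := hAB ▸ (by simpa using h)
        rcases this with huA | huB
        · exact (hnoarc u huA v hv).1 huv
        · exact hu huB
      have hrd : rD (ψ u) (ψ v) := by
        rcases hψ.1 u v huv with h | h
        · exact absurd (h ▸ hψv) hψu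
        · exact h
      rw [hφnB u hu, hφB v hv, hagree (ψ u) hψu]
      rcases hf''.1 _ _ hrd with h | h
      · exact Or.inl h
      · exact Or.inr h
    · rw [hφnB u hu, hφnB v hv]
      rcases hψ.1 u v huv with h | h
      · exact Or.inl (by rw [h])
      · exact hf'.1 _ _ h
  · -- acyclicity of fibers of φ
    intro c ⟨y, hy⟩
    by_cases hc : c = f'' x₀
    · -- use f''
      have key : ∀ a, φ a = c → f'' (ψ a) = c := by
        intro a ha
        by_cases haB : a ∈ B
        · rw [← hφB a haB]; exact ha
        · rw [hφnB a haB] at ha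
          have hax : ψ a ≠ x₀ := by
            intro h
            have : a ∈ A ∪ B := hAB ▸ (by simpa using h)
            rcases this with h' | h'
            · rw [h] at ha; exact hne (ha.trans hc)
            · exact haB h'
          rw [← hagree (ψ a) hax]; exact ha
      rcases cycle_lift rS (fun a b => f'' a = c ∧ f'' b = c ∧ rD a b) ψ
          (fun u v => φ u = c ∧ φ v = c ∧ rS u v)
          (fun u v ⟨h1, h2, h3⟩ => ⟨h3, by
            rcases hψ.1 u v h3 with h | h
            · exact Or.inl h
            · exact Or.inr ⟨key u h1, key v h2, h⟩⟩) hy with h | ⟨_, h⟩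
      · exact hf''.2 c ⟨ψ y, h⟩
      · exact hψ.2 (ψ y) ⟨y, h⟩
    · -- use f'
      have key : ∀ a, φ a = c → f' (ψ a) = c := by
        intro a ha
        by_cases haB : a ∈ B
        · rw [hφB a haB, hBx a haB] at ha; exact absurd ha.symm hc
        · rw [← hφnB a haB]; exact ha
      rcases cycle_lift rS (fun a b => f' a = c ∧ f' b = c ∧ rD a b) ψ
          (fun u v => φ u = c ∧ φ v = c ∧ rS u v)
          (fun u v ⟨h1, h2, h3⟩ => ⟨h3, by
            rcases hψ.1 u v h3 with h | h
            · exact Or.inl h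
            · exact Or.inr ⟨key u h1, key v h2, h⟩⟩) hy with h | ⟨_, h⟩
      · exact hf'.2 c ⟨ψ y, h⟩
      · exact hψ.2 (ψ y) ⟨y, h⟩
  · -- non-factoring
    rintro ⟨f, hf⟩
    obtain ⟨a, ha⟩ := hA
    obtain ⟨b, hb⟩ := hB
    have haB : a ∉ B := fun h => hdisj.ne_of_mem ha h rfl
    have h1 : φ a = f' x₀ := by rw [hφnB a haB, hAx a ha]
    have h2 : φ b = f'' x₀ := by rw [hφB b hb, hBx b hb]
    have : f x₀ = f' x₀ := by rw [← h1, hf]; simp [hAx a ha]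
    have h4 : f x₀ = f'' x₀ := by rw [← h2, hf]; simp [hBx b hb]
    exact hne (this ▸ h4)
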